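/- Let A be a symmetric δ-Leibniz admissible algebra over ℂ, i.e., the bracket [x,y]_δ := x*y − δ*(y*x) makes (A, [·,·]_δ) a symmetric δ-Leibniz algebra. Write x² := x*x and x³ := x²*x. Then: (A) if δ ∉ {1, −1, 1/2}, then x²*x = 0, x*x² = 0 and x²*x² = 0 for all x ∈ A (so A is a nilalgebra with nilindex 3); (B) if δ = 1/2, then x²*x = x*x², x²*x² = x³*x and x²*x² = x*x³ for all x ∈ A (hence, by Albert's criterion, A is power-associative). -/
import Mathlib


/-- The δ-commutator [x,y]_δ := x*y − δ•(y*x) of a (non-associative)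
ℂ-algebra. -/
def deltaComm {A : Type*} [AddCommGroup A] [Module ℂ A]
    (mul : A →ₗ[ℂ] A →ₗ[ℂ] A) (δ : ℂ) (x y : A) : A :=
  mul x y - δ • mul y x

/-- Let A be a symmetric δ-Leibniz admissible algebra over ℂ,
i.e., the δ-commutator makes A a symmetric δ-Leibniz algebra. With x² := x*x
and x³ := x²*x:
(A) if δ ∉ {1, −1, 1/2}, then x²*x = 0, x*x² = 0 and x²*x² = 0 (A is a
nilalgebra with nilindex 3);
(B) if δ = 1/2, then x²*x = x*x², x²*x² = x³*x and x²*x² = x*x³ (so A is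
power-associative by Albert's criterion). -/
theorem symmetric_deltaLeibniz_admissible_nil_or_powerAssociative
    (A : Type*) [AddCommGroup A] [Module ℂ A]
    (mul : A →ₗ[ℂ] A →ₗ[ℂ] A) (δ : ℂ)
    (rightL : ∀ x y z : A,
      deltaComm mul δ (deltaComm mul δ x y) z
        = δ • (deltaComm mul δ (deltaComm mul δ x z) y
             + deltaComm mul δ x (deltaComm mul δ y z)))
    (leftL : ∀ x y z : A,
      deltaComm mul δ x (deltaComm mul δ y z)
        = δ • (deltaComm mul δ (deltaComm mul δ x y) z
             + deltaComm mul δ y (deltaComm mul δ x z))) :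
    (δ ≠ 1 → δ ≠ -1 → δ ≠ 1/2 → ∀ x : A,
        mul (mul x x) x = 0 ∧ mul x (mul x x) = 0 ∧
        mul (mul x x) (mul x x) = 0) ∧
    (δ = 1/2 → ∀ x : A,
        mul (mul x x) x = mul x (mul x x) ∧
        mul (mul x x) (mul x x) = mul (mul (mul x x) x) x ∧
        mul (mul x x) (mul x x) = mul x (mul (mul x x) x)) := by
  constructor
  · intro h1 hm1 hh x
    have h1' : (1:ℂ) - δ ≠ 0 := by
      intro h; exact h1 (by linear_combination -h)
    have hm1' : (1:ℂ) + δ ≠ 0 := by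
      intro h; exact hm1 (by linear_combination h)
    have hh' : (2:ℂ)*δ - 1 ≠ 0 := by
      intro h; exact hh (by linear_combination h/2)
    have hd1' : δ - 1 ≠ 0 := by
      intro h; exact h1 (by linear_combination h)
    have hD : ((1-δ)*((1-δ+δ^2)^2-(δ^2-2*δ)^2)) ≠ 0 := by
      have : ((1-δ)*((1-δ+δ^2)^2-(δ^2-2*δ)^2))
          = (1-δ) * ((1+δ) * ((2*δ-1) * (δ-1))) := by ring
      rw [this]
      exact mul_ne_zero h1' (mul_ne_zero hm1' (mul_ne_zero hh' hd1'))
    have e1 := rightL x x x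
    have e2 := leftL x x x
    simp only [deltaComm, map_sub, map_smul, LinearMap.sub_apply, LinearMap.smul_apply,
      smul_sub, smul_add, smul_smul] at e1 e2
    have ha : mul (mul x x) x = 0 := by
      have hDa : ((1-δ)*((1-δ+δ^2)^2-(δ^2-2*δ)^2)) • mul (mul x x) x = 0 := by
        linear_combination (norm := module) (1-δ+δ^2) • e1 - (δ^2-2*δ) • e2
      exact (smul_eq_zero.mp hDa).resolve_left hD
    have hb : mul x (mul x x) = 0 := by
      have hDb : ((1-δ)*((1-δ+δ^2)^2-(δ^2-2*δ)^2)) • mul x (mul x x) = 0 := by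
        linear_combination (norm := module) (1-δ+δ^2) • e2 - (δ^2-2*δ) • e1
      exact (smul_eq_zero.mp hDb).resolve_left hD
    refine ⟨ha, hb, ?_⟩
    have e3 := leftL (mul x x) x x
    simp only [deltaComm] at e3
    rw [ha, hb] at e3
    simp only [map_sub, map_smul, map_zero, LinearMap.sub_apply, LinearMap.smul_apply,
      LinearMap.zero_apply, smul_sub, smul_add, smul_smul, smul_zero, zero_sub, sub_zero,
      zero_smul, sub_self, add_zero, zero_add, neg_zero] at e3
    have hDs : ((1-δ)*(1-δ)) • mul (mul x x) (mul x x) = 0 := by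
      linear_combination (norm := module) e3
    exact (smul_eq_zero.mp hDs).resolve_left (mul_ne_zero h1' h1')
  · intro hδ x
    subst hδ
    have e1 := rightL x x x
    simp only [deltaComm, map_sub, map_smul, LinearMap.sub_apply, LinearMap.smul_apply,
      smul_sub, smul_add, smul_smul] at e1
    have hab : mul (mul x x) x = mul x (mul x x) := by
      linear_combination (norm := module) ((8:ℂ)/3) • e1
    refine ⟨hab, ?_, ?_⟩ <;>
    · have e3 := leftL (mul x x) x x
      have e4 := rightL (mul x x) x x
      simp only [deltaComm] at e3 e4
      rw [← hab] at e3 e4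
      simp only [map_sub, map_smul, LinearMap.sub_apply, LinearMap.smul_apply,
        smul_sub, smul_add, smul_smul] at e3 e4
      first
      | linear_combination (norm := module) ((8:ℂ)/3) • e3 - ((8:ℂ)/3) • e4
      | linear_combination (norm := module) ((16:ℂ)/3) • e3 + ((8:ℂ)/3) • e4
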